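/- Let Y ⊆ P_n, 0 ≤ l < n, and z ∈ P_n with z_1 = ⋯ = z_{l+1}. Assume that I_{succ(z,l)} ⊆ I_Y ⊆ I_{Y_{z,l}} and that (z,l) ∈ Z(Y). Then Z(Y ∪ {z}) = Z(Y) \ {(z,l)}. -/

import Mathlib

open MvPolynomial

/-- `PartitionOn n x` : `x` is a weakly decreasing sequence of naturals (0-based
indexing, so `x 0` is the first part `x_1`) vanishing from index `n` on; this
encodes a partition in `P_n ⊆ ℤ^n_{≥0}`. -/
def PartitionOn (n : ℕ) (x : ℕ → ℕ) : Prop :=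
  (∀ i j : ℕ, i ≤ j → x j ≤ x i) ∧ ∀ i : ℕ, n ≤ i → x i = 0

/-- A partition: a weakly decreasing, eventually zero sequence of naturals. -/
def IsPartitionF (x : ℕ → ℕ) : Prop :=
  (∀ i j : ℕ, i ≤ j → x j ≤ x i) ∧ ∃ n : ℕ, ∀ i : ℕ, n ≤ i → x i = 0

/-- The conjugate partition (1-based index): `conj x i = #{j : x_j ≥ i}`. -/
noncomputable def conj (x : ℕ → ℕ) (i : ℕ) : ℕ :=
  Set.ncard { j : ℕ | i ≤ x j }

/-- The truncation `x(c)`, whose parts are `min (x i) c`. -/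
def trunc (x : ℕ → ℕ) (c : ℕ) : ℕ → ℕ := fun i => min (x i) c

/-- The rectangular partition `(b^a)`: `a` parts equal to `b`. -/
def rect (a b : ℕ) : ℕ → ℕ := fun i => if i < a then b else 0

/-- The size `|x| = x_1 + ⋯ + x_n` of a partition supported in the first `n` indices. -/
def psize (n : ℕ) (x : ℕ → ℕ) : ℕ := ∑ i ∈ Finset.range n, x i

/-- The set `Z(X)` : pairs `(z, l)` with `z ∈ P_n`, `l ≥ 0` such that, writing `c = z_1`:
(1) there is `x ∈ X` with `x(c) ≤ z` and `x'_{c+1} ≤ l+1`, and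
(2) every `x ∈ X` with `x(c) ≤ z` and `x'_{c+1} ≤ l+1` has `x'_{c+1} = l+1`. -/
noncomputable def ZX (n : ℕ) (X : Set (ℕ → ℕ)) : Set ((ℕ → ℕ) × ℕ) :=
  { zl | PartitionOn n zl.1 ∧
    (∃ x ∈ X, trunc x (zl.1 0) ≤ zl.1 ∧ conj x (zl.1 0 + 1) ≤ zl.2 + 1) ∧
    ∀ x ∈ X, trunc x (zl.1 0) ≤ zl.1 → conj x (zl.1 0 + 1) ≤ zl.2 + 1 →
      conj x (zl.1 0 + 1) = zl.2 + 1 }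

/-- The monomial `e^u = e_1^{u_1} ⋯ e_n^{u_n}` in `S = k[e_1, …, e_n]`. -/
noncomputable def mon (k : Type*) [Field k] (n : ℕ) (u : ℕ → ℕ) : MvPolynomial (Fin n) k :=
  ∏ i : Fin n, (X i : MvPolynomial (Fin n) k) ^ u (i : ℕ)

/-- The ideal `I_x` generated by the `S_n`-orbit of the monomial `e^x`. -/
noncomputable def Ipart (k : Type*) [Field k] (n : ℕ) (x : ℕ → ℕ) :
    Ideal (MvPolynomial (Fin n) k) :=
  Ideal.span { f | ∃ σ : Equiv.Perm (Fin n),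
    f = ∏ i : Fin n, (X i : MvPolynomial (Fin n) k) ^ x ((σ i : Fin n) : ℕ) }

/-- The ideal `I_X = Σ_{x ∈ X} I_x`. -/
noncomputable def IXset (k : Type*) [Field k] (n : ℕ) (Xs : Set (ℕ → ℕ)) :
    Ideal (MvPolynomial (Fin n) k) :=
  ⨆ x ∈ Xs, Ipart k n x

/-- `succ(z,l) = {x ∈ P_n : x ≥ z and x_i > z_i for some i > l}` (1-based `i > l`
corresponds to 0-based index `≥ l`). -/
def succSet (n l : ℕ) (z : ℕ → ℕ) : Set (ℕ → ℕ) :=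
  { x | PartitionOn n x ∧ (∀ i, z i ≤ x i) ∧ ∃ i, l ≤ i ∧ z i < x i }

/-- `Y_{z,l} = {((z_1+1)^{l+1})} ∪ {((z_i+1)^i) : l+1 < i ≤ n, z_{i-1} > z_i}`
(here `i = m+2` in 1-based indexing). -/
def Yset (n : ℕ) (z : ℕ → ℕ) (l : ℕ) : Set (ℕ → ℕ) :=
  {rect (l+1) (z 0 + 1)} ∪
    { y | ∃ m : ℕ, l ≤ m ∧ m + 2 ≤ n ∧ z (m+1) < z m ∧ y = rect (m+2) (z (m+1) + 1) }

/-- `Y'_{z,l} = {((z_i+1)^i) : l+1 < i ≤ n, z_{i-1} > z_i}`. -/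
def Y'set (n : ℕ) (z : ℕ → ℕ) (l : ℕ) : Set (ℕ → ℕ) :=
  { y | ∃ m : ℕ, l ≤ m ∧ m + 2 ≤ n ∧ z (m+1) < z m ∧ y = rect (m+2) (z (m+1) + 1) }

/-- An ideal `I` is symmetric shifted if for every monomial `e^x ∈ I` with `x ∈ P_n`
and every `1 < k ≤ n` (0-based `0 < j < n`) with `x_1 > x_k`, one has `e^x · e_k/e_1 ∈ I`. -/
def SymShifted (k : Type*) [Field k] (n : ℕ) (I : Ideal (MvPolynomial (Fin n) k)) : Prop :=
  ∀ x : ℕ → ℕ, PartitionOn n x → mon k n x ∈ I →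
    ∀ j : ℕ, 0 < j → j < n → x j < x 0 →
      mon k n (fun i => if i = 0 then x 0 - 1 else if i = j then x j + 1 else x i) ∈ I

/-- The partitioning problem `BP(d, C; w)` is `r`-feasible: the multiset of `d` copies of
each of `w_1, …, w_n` (balls indexed by `Fin d × Fin n`, ball `(j,i)` of weight `w_i`)
can be distributed into bins `B_1, …, B_n` of exactly `d` balls each so that
`w(B_i) ≤ C_i` for all `i = r+1, …, n` (0-based bins `≥ r`). -/
def RFeasible (n d r : ℕ) (C w : ℕ → ℕ) : Prop :=
  ∃ A : Fin d × Fin n → Fin n,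
    (∀ b : Fin n, (Finset.univ.filter fun p => A p = b).card = d) ∧
    ∀ b : Fin n, r ≤ (b : ℕ) →
      (∑ p ∈ Finset.univ.filter (fun p => A p = b), w ((p.2 : Fin n) : ℕ)) ≤ C (b : ℕ)

/-- `X_w^d = {x ∈ P_n : x = σ_1(w) + ⋯ + σ_d(w) for some σ_1, …, σ_d ∈ S_n}`. -/
def XwPow (n d : ℕ) (w : ℕ → ℕ) : Set (ℕ → ℕ) :=
  { x | PartitionOn n x ∧ ∃ σ : Fin d → Equiv.Perm (Fin n),
      ∀ i : Fin n, x (i : ℕ) = ∑ j : Fin d, w ((σ j i : Fin n) : ℕ) }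

/-- `Y_n`: the elements of `Y` with at most `n` nonzero parts, regarded in `P_n`. -/
def restr (Y : Set (ℕ → ℕ)) (n : ℕ) : Set (ℕ → ℕ) :=
  { x ∈ Y | ∀ i, n ≤ i → x i = 0 }


section Aux

open MvPolynomial

lemma prod_pow_eq_monomial' (k : Type*) [Field k] (n : ℕ) (g : Fin n → ℕ) :
    ∏ i : Fin n, (X i : MvPolynomial (Fin n) k) ^ g i
      = monomial (Finsupp.equivFunOnFinite.symm g) (1 : k) := by
  rw [← prod_X_pow_eq_monomial]
  refine (Finset.prod_subset (Finset.subset_univ _) ?_).symm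
  intro i _ hi
  simp only [Finsupp.mem_support_iff, ne_eq, not_not] at hi
  simp only [Finsupp.coe_equivFunOnFinite_symm] at hi ⊢
  rw [hi, pow_zero]

lemma Ipart_eq (k : Type*) [Field k] (n : ℕ) (x : ℕ → ℕ) :
    Ipart k n x = Ideal.span ((fun d => monomial d (1 : k)) ''
      { d : Fin n →₀ ℕ | ∃ σ : Equiv.Perm (Fin n),
          d = Finsupp.equivFunOnFinite.symm fun i : Fin n => x ((σ i : Fin n) : ℕ) }) := by
  rw [Ipart]
  congr 1
  ext f
  constructor
  · rintro ⟨σ, rfl⟩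
    exact ⟨_, ⟨σ, rfl⟩, (prod_pow_eq_monomial' k n _).symm⟩
  · rintro ⟨d, ⟨σ, rfl⟩, rfl⟩
    exact ⟨σ, (prod_pow_eq_monomial' k n _).symm⟩

lemma IXset_eq (k : Type*) [Field k] (n : ℕ) (Xs : Set (ℕ → ℕ)) :
    IXset k n Xs = Ideal.span ((fun d => monomial d (1 : k)) ''
      { d : Fin n →₀ ℕ | ∃ y ∈ Xs, ∃ σ : Equiv.Perm (Fin n),
          d = Finsupp.equivFunOnFinite.symm fun i : Fin n => y ((σ i : Fin n) : ℕ) }) := by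
  rw [IXset]
  simp_rw [Ipart_eq]
  rw [iSup_subtype', ← Ideal.span_iUnion, ← Set.image_iUnion]
  refine congrArg Ideal.span (congrArg (Set.image _) ?_)
  ext d
  constructor
  · rintro hd
    obtain ⟨⟨y, hy⟩, hd⟩ := Set.mem_iUnion.mp hd
    obtain ⟨σ, rfl⟩ := hd
    exact ⟨y, hy, σ, rfl⟩
  · rintro ⟨y, hy, σ, rfl⟩
    exact Set.mem_iUnion.mpr ⟨⟨y, hy⟩, ⟨σ, rfl⟩⟩

lemma mem_IXset_iff (k : Type*) [Field k] (n : ℕ) (Xs : Set (ℕ → ℕ)) (u : ℕ → ℕ) :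
    mon k n u ∈ IXset k n Xs ↔
      ∃ y ∈ Xs, ∃ σ : Equiv.Perm (Fin n), ∀ i : Fin n, y ((σ i : Fin n) : ℕ) ≤ u (i : ℕ) := by
  classical
  rw [IXset_eq, mon, prod_pow_eq_monomial', mem_ideal_span_monomial_image]
  rw [support_monomial, if_neg (one_ne_zero)]
  constructor
  · intro h
    obtain ⟨si, ⟨y, hy, σ, rfl⟩, hle⟩ := h _ (Finset.mem_singleton_self _)
    exact ⟨y, hy, σ, fun i => by simpa using hle i⟩
  · rintro ⟨y, hy, σ, hle⟩ xi hxi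
    rw [Finset.mem_singleton] at hxi
    subst hxi
    exact ⟨_, ⟨y, hy, σ, rfl⟩, fun i => by simpa using hle i⟩

lemma exists_perm_le (n : ℕ) (σ : Equiv.Perm (Fin n)) (i : Fin n) :
    ∃ j : Fin n, i ≤ j ∧ σ j ≤ i := by
  by_contra h
  push_neg at h
  have hmap : ∀ j ∈ Finset.Ici i, σ j ∈ Finset.Ioi i := by
    intro j hj
    exact Finset.mem_Ioi.mpr (h j (Finset.mem_Ici.mp hj))
  have hcard := Finset.card_le_card_of_injOn σ hmap
    (Set.injOn_of_injective σ.injective)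
  rw [Fin.card_Ici, Fin.card_Ioi] at hcard
  omega

lemma sorted_dom (n : ℕ) (x y : ℕ → ℕ)
    (hx : ∀ i j : ℕ, i ≤ j → x j ≤ x i) (hy : ∀ i j : ℕ, i ≤ j → y j ≤ y i)
    (hy0 : ∀ i : ℕ, n ≤ i → y i = 0) (σ : Equiv.Perm (Fin n))
    (h : ∀ i : Fin n, y ((σ i : Fin n) : ℕ) ≤ x (i : ℕ)) :
    ∀ i : ℕ, y i ≤ x i := by
  intro i
  by_cases hi : n ≤ i
  · rw [hy0 i hi]; exact Nat.zero_le _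
  · push_neg at hi
    obtain ⟨j, hij, hji⟩ := exists_perm_le n σ ⟨i, hi⟩
    calc y i ≤ y ((σ j : Fin n) : ℕ) := hy _ _ hji
      _ ≤ x (j : ℕ) := h j
      _ ≤ x i := hx _ _ hij

lemma ncard_le_of_subset_Iio (S : Set ℕ) (t : ℕ) (h : S ⊆ Set.Iio t) : S.ncard ≤ t := by
  have := Set.ncard_le_ncard h (Set.finite_Iio t)
  rwa [← Finset.coe_range, Set.ncard_coe_finset, Finset.card_range] at this

lemma conj_eq_of (x : ℕ → ℕ) (w t : ℕ) (h1 : ∀ j, j < t → w + 1 ≤ x j)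
    (h2 : ∀ j, t ≤ j → x j ≤ w) : conj x (w + 1) = t := by
  have hset : {j : ℕ | w + 1 ≤ x j} = Set.Iio t := by
    ext j
    simp only [Set.mem_setOf_eq, Set.mem_Iio]
    constructor
    · intro hj
      by_contra hc
      push_neg at hc
      have := h2 j hc
      omega
    · exact h1 j
  rw [conj, hset, ← Finset.coe_range, Set.ncard_coe_finset, Finset.card_range]

lemma rect_partitionOn (n a b : ℕ) (h : a ≤ n) : PartitionOn n (rect a b) := by
  constructor
  · intro i j hij
    simp only [rect]
    split_ifs <;> omega
  · intro i hi
    simp only [rect]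
    rw [if_neg (by omega)]

/-- The key construction: if `w 0 < z 0` and `trunc z (w 0) ≤ w`, there is `y ∈ Y`
with `trunc y (w 0) ≤ w` and `conj y (w 0 + 1) ≤ conj z (w 0 + 1)`. -/
lemma key_lemma (n l : ℕ) (hl : l < n) (z : ℕ → ℕ) (hz : PartitionOn n z)
    (hzflat : ∀ i ≤ l, z i = z 0) (Y : Set (ℕ → ℕ))
    (H1 : ∀ x ∈ succSet n l z, ∃ y ∈ Y, ∀ i, y i ≤ x i)
    (w : ℕ → ℕ) (hw0 : w 0 < z 0) (hxt : trunc z (w 0) ≤ w) :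
    ∃ y ∈ Y, trunc y (w 0) ≤ w ∧ conj y (w 0 + 1) ≤ conj z (w 0 + 1) := by
  set w0 := w 0 with hw0def
  have hne : {j | z j ≤ w0}.Nonempty := ⟨n, by simp [hz.2 n le_rfl]⟩
  set t := sInf {j | z j ≤ w0} with ht
  have htmem : z t ≤ w0 := Nat.sInf_mem hne
  have hlt : ∀ j, j < t → w0 + 1 ≤ z j := by
    intro j hj
    by_contra hcon
    push_neg at hcon
    have h9 : t ≤ j := Nat.sInf_le (show j ∈ {j | z j ≤ w0} by
      simp only [Set.mem_setOf_eq]; omega)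
    omega
  have hge : ∀ j, t ≤ j → z j ≤ w0 := fun j hj => le_trans (hz.1 t j hj) htmem
  have hconjz : conj z (w0 + 1) = t := conj_eq_of z w0 t hlt hge
  have hlt1 : l + 1 ≤ t := by
    by_contra hcon
    push_neg at hcon
    have h5 := hge l (by omega)
    rw [hzflat l le_rfl] at h5
    omega
  set xnew : ℕ → ℕ := fun i => if i ≤ l then z i + 1 else z i with hxnew
  have hxz : ∀ i, z i ≤ xnew i := by
    intro i
    by_cases h : i ≤ l <;> simp [hxnew, h]
  have hxpart : PartitionOn n xnew := by
    constructor
    · intro i j hij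
      by_cases hjl : j ≤ l
      · have hil : i ≤ l := le_trans hij hjl
        simp only [hxnew, if_pos hjl, if_pos hil]
        exact Nat.succ_le_succ (hz.1 i j hij)
      · simp only [hxnew, if_neg hjl]
        by_cases hil : i ≤ l
        · simp only [if_pos hil]
          exact le_trans (hz.1 i j hij) (Nat.le_succ _)
        · simp only [if_neg hil]
          exact hz.1 i j hij
    · intro i hi
      have hni : ¬ i ≤ l := by omega
      simp [hxnew, hni, hz.2 i hi]
  have hxsucc : xnew ∈ succSet n l z := ⟨hxpart, hxz, ⟨l, le_rfl, by simp [hxnew]⟩⟩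
  obtain ⟨y, hyY, hyle⟩ := H1 xnew hxsucc
  refine ⟨y, hyY, ?_, ?_⟩
  · intro i
    show min (y i) w0 ≤ w i
    by_cases hit : i < t
    · have h1 : min (z i) w0 ≤ w i := hxt i
      have h2 := hlt i hit
      omega
    · push_neg at hit
      have h1 : min (z i) w0 ≤ w i := hxt i
      have h2 : z i ≤ w0 := hge i hit
      have h3 : y i ≤ xnew i := hyle i
      have h4 : xnew i = z i := if_neg (by omega)
      omega
  · rw [hconjz]
    have hsub : {j : ℕ | w0 + 1 ≤ y j} ⊆ Set.Iio t := by
      intro j hj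
      simp only [Set.mem_setOf_eq] at hj
      simp only [Set.mem_Iio]
      by_contra hcon
      push_neg at hcon
      have h3 := hyle j
      have h4 : xnew j = z j := if_neg (by omega)
      have h5 := hge j hcon
      omega
    calc conj y (w0 + 1) = ({j : ℕ | w0 + 1 ≤ y j} : Set ℕ).ncard := rfl
      _ ≤ t := ncard_le_of_subset_Iio _ t hsub

end Aux

theorem stmt_6 {k : Type*} [Field k] (n l : ℕ) (hl : l < n)
    (z : ℕ → ℕ) (hz : PartitionOn n z) (hzflat : ∀ i ≤ l, z i = z 0)
    (Y : Set (ℕ → ℕ)) (hY : ∀ y ∈ Y, PartitionOn n y)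
    (h1 : IXset k n (succSet n l z) ≤ IXset k n Y)
    (h2 : IXset k n Y ≤ IXset k n (Yset n z l))
    (hzl : (z, l) ∈ ZX n Y) :
    ZX n (Y ∪ {z}) = ZX n Y \ {(z, l)} := by
  classical
  have hzdec := hz.1
  simp only [ZX, Set.mem_setOf_eq] at hzl
  obtain ⟨hzpart, ⟨x0, hx0Y, hx0t, hx0c⟩, hzall⟩ := hzl
  have hx0eq : conj x0 (z 0 + 1) = l + 1 := hzall x0 hx0Y hx0t hx0c
  -- conj z (z 0 + 1) = 0
  have hconjz0 : conj z (z 0 + 1) = 0 :=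
    conj_eq_of z (z 0) 0 (fun j hj => absurd hj (by omega)) (fun j _ => hzdec 0 j (Nat.zero_le j))
  have htrzz : trunc z (z 0) ≤ z := fun i => min_le_left _ _
  -- combinatorial form of h1
  have H1 : ∀ x ∈ succSet n l z, ∃ y ∈ Y, ∀ i, y i ≤ x i := by
    intro x hx
    have hm : mon k n x ∈ IXset k n (succSet n l z) :=
      (mem_IXset_iff k n _ x).mpr ⟨x, hx, 1, fun i => by simp⟩
    obtain ⟨y, hyY, σ, hle⟩ := (mem_IXset_iff k n Y x).mp (h1 hm)
    exact ⟨y, hyY, sorted_dom n x y hx.1.1 (hY y hyY).1 (hY y hyY).2 σ hle⟩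
  -- combinatorial form of h2
  have H2 : ∀ y ∈ Y, ∃ u ∈ Yset n z l, ∀ i, u i ≤ y i := by
    intro y hyY
    have hm : mon k n y ∈ IXset k n Y :=
      (mem_IXset_iff k n _ y).mpr ⟨y, hyY, 1, fun i => by simp⟩
    obtain ⟨u, huY, σ, hle⟩ := (mem_IXset_iff k n (Yset n z l) y).mp (h2 hm)
    have hupart : PartitionOn n u := by
      rcases huY with h | ⟨m', _, hm2, _, rfl⟩
      · rw [Set.mem_singleton_iff] at h
        subst h
        exact rect_partitionOn n (l + 1) _ hl
      · exact rect_partitionOn n (m' + 2) _ hm2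
    exact ⟨u, huY, sorted_dom n y u (hY y hyY).1 hupart.1 hupart.2 σ hle⟩
  ext ⟨w, m⟩
  simp only [ZX, Set.mem_diff, Set.mem_singleton_iff, Set.mem_setOf_eq]
  constructor
  · -- Z(Y ∪ {z}) ⊆ Z(Y) \ {(z,l)}
    rintro ⟨hwp, ⟨x, hxU, hxt, hxc⟩, hall⟩
    have hallY : ∀ x ∈ Y, trunc x (w 0) ≤ w → conj x (w 0 + 1) ≤ m + 1 →
        conj x (w 0 + 1) = m + 1 := fun x hx => hall x (Or.inl hx)
    have hne : ¬ ((w, m) = (z, l)) := by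
      intro heq
      rw [Prod.mk.injEq] at heq
      obtain ⟨hw, hm⟩ := heq
      have h9 := hall z (Or.inr rfl) (by rw [hw]; exact htrzz)
        (by rw [show w 0 = z 0 by rw [hw], hconjz0]; omega)
      rw [show w 0 = z 0 by rw [hw], hconjz0] at h9
      omega
    refine ⟨⟨hwp, ?_, hallY⟩, hne⟩
    rcases hxU with hxY | hxz
    · exact ⟨x, hxY, hxt, hxc⟩
    · rw [Set.mem_singleton_iff] at hxz
      rw [hxz] at hxt hxc
      by_cases hw0 : w 0 < z 0
      · obtain ⟨y, hyY, hytr, hyconj⟩ := key_lemma n l hl z ⟨hzdec, hz.2⟩ hzflat Y H1 w hw0 hxt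
        exact ⟨y, hyY, hytr, le_trans hyconj hxc⟩
      · push_neg at hw0
        exfalso
        have h0 : conj z (w 0 + 1) = 0 :=
          conj_eq_of z (w 0) 0 (fun j hj => absurd hj (by omega))
            (fun j _ => le_trans (hzdec 0 j (Nat.zero_le j)) hw0)
        have h9 := hall z (Or.inr rfl) hxt hxc
        rw [h0] at h9
        omega
  · -- Z(Y) \ {(z,l)} ⊆ Z(Y ∪ {z})
    rintro ⟨⟨hwp, ⟨x1, hx1Y, hx1t, hx1c⟩, hall⟩, hne⟩
    refine ⟨hwp, ⟨x1, Or.inl hx1Y, hx1t, hx1c⟩, ?_⟩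
    intro x hxU hxt hxc
    rcases hxU with hxY | hxz
    · exact hall x hxY hxt hxc
    · rw [Set.mem_singleton_iff] at hxz
      rw [hxz] at hxt hxc ⊢
      by_cases hw0 : w 0 < z 0
      · obtain ⟨y, hyY, hytr, hyconj⟩ := key_lemma n l hl z ⟨hzdec, hz.2⟩ hzflat Y H1 w hw0 hxt
        have := hall y hyY hytr (le_trans hyconj hxc)
        omega
      · push_neg at hw0
        exfalso
        have hzw : ∀ i, z i ≤ w i := by
          intro i
          have h5 : min (z i) (w 0) ≤ w i := hxt i
          have h6 : z i ≤ z 0 := hzdec 0 i (Nat.zero_le i)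
          omega
        by_cases hsucc : ∃ i, l ≤ i ∧ z i < w i
        · -- w ∈ succ(z,l); get y ≤ w with conj = 0, contradiction
          obtain ⟨y, hyY, hyw⟩ := H1 w ⟨hwp, hzw, hsucc⟩
          have hytr : trunc y (w 0) ≤ w := fun i => le_trans (min_le_left _ _) (hyw i)
          have hc0 : conj y (w 0 + 1) = 0 :=
            conj_eq_of y (w 0) 0 (fun j hj => absurd hj (by omega))
              (fun j _ => le_trans (hyw j) (hwp.1 0 j (Nat.zero_le j)))
          have := hall y hyY hytr (by rw [hc0]; omega)
          rw [hc0] at this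
          omega
        · push_neg at hsucc
          have hweq : ∀ i, l ≤ i → w i = z i := fun i hi =>
            le_antisymm (hsucc i hi) (hzw i)
          by_cases hwz : w = z
          · -- w = z, m ≠ l
            have hml : m ≠ l := fun h => hne (by rw [hwz, h])
            have hw0z : w 0 = z 0 := by rw [hwz]
            rcases Nat.lt_or_ge m l with hltml | hgeml
            · have e1 := hall x1 hx1Y hx1t hx1c
              have e2 := hzall x1 hx1Y (by rw [← hwz]; exact hx1t)
                (by rw [← hw0z]; omega)
              rw [hw0z] at e1
              omega
            · have hgt : l < m := lt_of_le_of_ne hgeml (Ne.symm hml)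
              have e1 := hall x0 hx0Y (by rw [hwz]; exact hx0t)
                (by rw [hw0z, hx0eq]; omega)
              rw [hw0z, hx0eq] at e1
              omega
          · -- w ≠ z, strictly bigger below l, use h2
            have hex : ∃ i, w i ≠ z i := by
              by_contra hcon
              push_neg at hcon
              exact hwz (funext hcon)
            obtain ⟨i0, hi0⟩ := hex
            have hi0l : i0 < l := by
              by_contra hcon
              push_neg at hcon
              exact hi0 (hweq i0 hcon)
            have hwi0 : z 0 < w i0 := by
              have := hzflat i0 (le_of_lt hi0l)
              have := hzw i0
              omega
            have hw0c : z 0 < w 0 := lt_of_lt_of_le hwi0 (hwp.1 0 i0 (Nat.zero_le i0))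
            -- x1 satisfies trunc x1 (w 0) ≤ w; x1 ≤ z beyond l
            have hx1z : ∀ i, l ≤ i → x1 i ≤ z i := by
              intro i hi
              have h5 : min (x1 i) (w 0) ≤ w i := hx1t i
              have h6 : w i = z i := hweq i hi
              have h7 : z i ≤ z 0 := hzdec 0 i (Nat.zero_le i)
              omega
            obtain ⟨u, huY, hule⟩ := H2 x1 hx1Y
            rcases huY with h | ⟨m', hm1, hm2, hm3, rfl⟩
            · rw [Set.mem_singleton_iff] at h
              subst h
              have h5 := hule l
              have h6 : rect (l + 1) (z 0 + 1) l = z 0 + 1 := if_pos (by omega)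
              have h7 := hx1z l le_rfl
              have h8 := hzflat l le_rfl
              omega
            · have h5 := hule (m' + 1)
              have h6 : rect (m' + 2) (z (m' + 1) + 1) (m' + 1) = z (m' + 1) + 1 :=
                if_pos (by omega)
              have h7 := hx1z (m' + 1) (by omega)
              omega
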